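/- If U is an upward-closed subset of N^E (with respect to the componentwise order), then there exists k ≥ 1 such that for all c in N^E, c ∈ U if and only if τ_k(c) ∈ U. -/

import Mathlib

/-- k-truncation of a vector in ℕ^E: each component is capped at k. -/
def trunc {E : Type*} (k : ℕ) (c : E → ℕ) : E → ℕ := fun e => min k (c e)

/-- For an upward-closed subset U of ℕ^E there is a truncation level k ≥ 1 such
that membership in U is determined by the k-truncation. -/
theorem upward_closed_determined_by_truncation {E : Type*} [Fintype E] [Nonempty E]
    (U : Set (E → ℕ)) (hU : ∀ c d : E → ℕ, c ∈ U → c ≤ d → d ∈ U) :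
    ∃ k : ℕ, 1 ≤ k ∧ ∀ c : E → ℕ, c ∈ U ↔ trunc k c ∈ U := by
  classical
  have pwo : ∀ S : Set (E → ℕ), S.IsPWO := fun S =>
    Set.isPWO_of_wellQuasiOrderedLE S
  -- minimal elements of U
  set M : Set (E → ℕ) := {m | m ∈ U ∧ ∀ u ∈ U, ¬ u < m} with hM
  -- M is an antichain
  have hanti : IsAntichain (· ≤ ·) M := by
    intro a ha b hb hab hle
    exact hb.2 a ha.1 (lt_of_le_of_ne hle hab)
  have hMfin : M.Finite :=
    hanti.finite_of_partiallyWellOrderedOn ((pwo M))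
  -- bound
  set k : ℕ := 1 + hMfin.toFinset.sup (fun m => Finset.univ.sup m) with hk
  refine ⟨k, Nat.le_add_right 1 _, fun c => ?_⟩
  constructor
  · intro hc
    -- find a minimal element below c
    set S : Set (E → ℕ) := {d | d ∈ U ∧ d ≤ c} with hS
    have hSne : S.Nonempty := ⟨c, hc, le_refl c⟩
    have hSwf : S.IsWF := (pwo S).isWF
    set m := hSwf.min hSne with hm
    have hmS : m ∈ S := hSwf.min_mem hSne
    have hmM : m ∈ M := by
      refine ⟨hmS.1, fun u hu hlt => ?_⟩
      exact hSwf.not_lt_min hSne ⟨hu, hlt.le.trans hmS.2⟩ hlt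
    have hmk : ∀ e, m e ≤ k := fun e => by
      calc m e ≤ Finset.univ.sup m := Finset.le_sup (Finset.mem_univ e)
        _ ≤ hMfin.toFinset.sup (fun m => Finset.univ.sup m) :=
            Finset.le_sup (hMfin.mem_toFinset.2 hmM)
        _ ≤ k := le_add_self
    refine hU m _ hmS.1 fun e => le_min (hmk e) (hmS.2 e)
  · intro hc
    exact hU _ c hc fun e => min_le_right _ _
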